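/- Let η ∈ [0,1) and ω ≥ 0, and define P(λ) := (1 − λ + λη)² + λ²ω for λ ∈ [0,1]. Set λ⋆ := min((1−η)/((1−η)² + ω), 1). Then λ⋆ ∈ (0,1], P(λ⋆) < 1, and P(λ⋆) ≤ P(λ) for every λ ∈ (0,1]. Consequently, for any x ∈ ℝ^d and any square-integrable random vector Z with ‖E[Z] − x‖ ≤ η‖x‖ and E[‖Z − E[Z]‖²] ≤ ω‖x‖², one has E[‖λ⋆Z − x‖²] ≤ (1 − α)‖x‖² with α := 1 − P(λ⋆) ∈ (0,1]. -/

import Mathlib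

open MeasureTheory
local notation "⟪" x ", " y "⟫" => @inner ℝ _ _ x y

lemma key_bound {d : ℕ} {Ω : Type*} [MeasurableSpace Ω] (P : Measure Ω) [IsProbabilityMeasure P]
    (η w lam : ℝ) (hlam0 : 0 < lam) (hlam1 : lam ≤ 1)
    (x : EuclideanSpace ℝ (Fin d)) (Z : Ω → EuclideanSpace ℝ (Fin d))
    (hZ : MemLp Z 2 P)
    (hb : ‖(∫ a, Z a ∂P) - x‖ ≤ η * ‖x‖)
    (hv : (∫ a, ‖Z a - ∫ a', Z a' ∂P‖ ^ 2 ∂P) ≤ w * ‖x‖ ^ 2) :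
    (∫ a, ‖lam • Z a - x‖ ^ 2 ∂P) ≤ ((1 - lam + lam * η) ^ 2 + lam ^ 2 * w) * ‖x‖ ^ 2 := by
  set μZ := ∫ a, Z a ∂P with hμZ
  set c : EuclideanSpace ℝ (Fin d) := lam • μZ - x with hc
  have hZ1 : Integrable Z P := hZ.integrable one_le_two
  have hint0 : Integrable (fun a => Z a - μZ) P := hZ1.sub (integrable_const μZ)
  have hmean : (∫ a, (Z a - μZ) ∂P) = 0 := by
    rw [integral_sub hZ1 (integrable_const μZ), integral_const]
    simp [hμZ]
  have hsq : Integrable (fun a => ‖Z a - μZ‖ ^ 2) P := by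
    have h2 : MemLp (fun a => Z a - μZ) 2 P := hZ.sub (memLp_const μZ)
    exact (memLp_two_iff_integrable_sq_norm h2.aestronglyMeasurable).mp h2
  have hinner : Integrable (fun a => ⟪c, Z a - μZ⟫) P := hint0.const_inner c
  have hpt : ∀ a, ‖lam • Z a - x‖ ^ 2
      = lam ^ 2 * ‖Z a - μZ‖ ^ 2 + (2 * lam) * ⟪c, Z a - μZ⟫ + ‖c‖ ^ 2 := by
    intro a
    have h1 : lam • Z a - x = lam • (Z a - μZ) + c := by
      rw [hc]; module
    rw [h1, @norm_add_sq_real]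
    rw [norm_smul, real_inner_smul_left, real_inner_comm]
    rw [Real.norm_eq_abs, abs_of_pos hlam0, mul_pow]
    ring
  have hIeq : (∫ a, ‖lam • Z a - x‖ ^ 2 ∂P)
      = lam ^ 2 * (∫ a, ‖Z a - μZ‖ ^ 2 ∂P) + ‖c‖ ^ 2 := by
    simp_rw [hpt]
    have hI1 : Integrable (fun a => lam ^ 2 * ‖Z a - μZ‖ ^ 2) P := hsq.const_mul _
    have hI2 : Integrable (fun a => (2 * lam) * ⟪c, Z a - μZ⟫) P := hinner.const_mul _
    have hI12 : Integrable (fun a => lam ^ 2 * ‖Z a - μZ‖ ^ 2 + (2 * lam) * ⟪c, Z a - μZ⟫) P :=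
      hI1.add hI2
    rw [integral_add hI12 (integrable_const _),
        integral_add hI1 hI2,
        integral_const_mul, integral_const_mul, integral_inner hint0, hmean,
        integral_const]
    simp
  rw [hIeq]
  have hcnorm : ‖c‖ ≤ (1 - lam + lam * η) * ‖x‖ := by
    have h1 : c = lam • (μZ - x) - (1 - lam) • x := by rw [hc]; module
    calc ‖c‖ ≤ ‖lam • (μZ - x)‖ + ‖(1 - lam) • x‖ := by rw [h1]; exact norm_sub_le _ _
    _ = lam * ‖μZ - x‖ + (1 - lam) * ‖x‖ := by
        rw [norm_smul, norm_smul, Real.norm_eq_abs, Real.norm_eq_abs,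
          abs_of_pos hlam0, abs_of_nonneg (by linarith)]
    _ ≤ lam * (η * ‖x‖) + (1 - lam) * ‖x‖ := by
        gcongr
    _ = (1 - lam + lam * η) * ‖x‖ := by ring
  have hcsq : ‖c‖ ^ 2 ≤ (1 - lam + lam * η) ^ 2 * ‖x‖ ^ 2 := by
    rw [← mul_pow]
    exact pow_le_pow_left₀ (norm_nonneg c) hcnorm 2
  nlinarith [sq_nonneg lam, mul_le_mul_of_nonneg_left hv (sq_nonneg lam)]

lemma alg_part (η w : ℝ) (hη0 : 0 ≤ η) (hη1 : η < 1) (hw : 0 ≤ w) :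
    let Pf : ℝ → ℝ := fun lam => (1 - lam + lam * η) ^ 2 + lam ^ 2 * w
    let lamStar : ℝ := min ((1 - η) / ((1 - η) ^ 2 + w)) 1
    (0 < lamStar ∧ lamStar ≤ 1) ∧ Pf lamStar < 1 ∧
      (∀ lam : ℝ, 0 < lam → lam ≤ 1 → Pf lamStar ≤ Pf lam) := by
  intro Pf lamStar
  have hA : 0 < 1 - η := by linarith
  have hD : 0 < (1 - η) ^ 2 + w := by positivity
  have hratio : 0 < (1 - η) / ((1 - η) ^ 2 + w) := div_pos hA hD
  have hls0 : 0 < lamStar := lt_min hratio one_pos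
  have hls1 : lamStar ≤ 1 := min_le_right _ _
  refine ⟨⟨hls0, hls1⟩, ?_, ?_⟩
  · rcases le_or_gt ((1 - η) / ((1 - η) ^ 2 + w)) 1 with h | h
    · have he : lamStar = (1 - η) / ((1 - η) ^ 2 + w) := min_eq_left h
      show (1 - lamStar + lamStar * η) ^ 2 + lamStar ^ 2 * w < 1
      rw [he]
      have : (1 - (1 - η) / ((1 - η) ^ 2 + w) + (1 - η) / ((1 - η) ^ 2 + w) * η) ^ 2
          + ((1 - η) / ((1 - η) ^ 2 + w)) ^ 2 * w
          = 1 - (1 - η) ^ 2 / ((1 - η) ^ 2 + w) := by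
        field_simp
        ring
      rw [this]
      have : 0 < (1 - η) ^ 2 / ((1 - η) ^ 2 + w) := by positivity
      linarith
    · have he : lamStar = 1 := min_eq_right (le_of_lt h)
      show (1 - lamStar + lamStar * η) ^ 2 + lamStar ^ 2 * w < 1
      rw [he]
      have hDA : (1 - η) ^ 2 + w < 1 - η := by
        have := (one_lt_div hD).mp h; linarith
      nlinarith
  · intro lam hl0 hl1
    rcases le_or_gt ((1 - η) / ((1 - η) ^ 2 + w)) 1 with h | h
    · have he : lamStar = (1 - η) / ((1 - η) ^ 2 + w) := min_eq_left h
      show (1 - lamStar + lamStar * η) ^ 2 + lamStar ^ 2 * w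
          ≤ (1 - lam + lam * η) ^ 2 + lam ^ 2 * w
      rw [he]
      have key : (1 - lam + lam * η) ^ 2 + lam ^ 2 * w
          - ((1 - (1 - η) / ((1 - η) ^ 2 + w) + (1 - η) / ((1 - η) ^ 2 + w) * η) ^ 2
            + ((1 - η) / ((1 - η) ^ 2 + w)) ^ 2 * w)
          = ((1 - η) ^ 2 + w) * (lam - (1 - η) / ((1 - η) ^ 2 + w)) ^ 2 := by
        field_simp
        ring
      nlinarith [sq_nonneg (lam - (1 - η) / ((1 - η) ^ 2 + w))]
    · have he : lamStar = 1 := min_eq_right (le_of_lt h)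
      show (1 - lamStar + lamStar * η) ^ 2 + lamStar ^ 2 * w
          ≤ (1 - lam + lam * η) ^ 2 + lam ^ 2 * w
      rw [he]
      have hDA : (1 - η) ^ 2 + w < 1 - η := by
        have := (one_lt_div hD).mp h; linarith
      nlinarith [sq_nonneg (lam - 1), mul_nonneg (sq_nonneg lam) hw]

/-- The optimal scaling factor `λ⋆ = min((1-η)/((1-η)²+ω), 1)` makes the total error factor
`P(λ) = (1-λ+λη)² + λ²ω` smaller than `1`, is optimal among `λ ∈ (0,1]`, and the
correspondingly scaled compressor is contractive with `α = 1 - P(λ⋆) ∈ (0,1]`. -/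
theorem optimal_scaling_contractive
    {d : ℕ} {Ω : Type*} [MeasurableSpace Ω] (P : Measure Ω) [IsProbabilityMeasure P]
    (η w : ℝ) (hη0 : 0 ≤ η) (hη1 : η < 1) (hw : 0 ≤ w) :
    let Pf : ℝ → ℝ := fun lam => (1 - lam + lam * η) ^ 2 + lam ^ 2 * w
    let lamStar : ℝ := min ((1 - η) / ((1 - η) ^ 2 + w)) 1
    (0 < lamStar ∧ lamStar ≤ 1) ∧
      Pf lamStar < 1 ∧
      (∀ lam : ℝ, 0 < lam → lam ≤ 1 → Pf lamStar ≤ Pf lam) ∧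
      (0 < 1 - Pf lamStar ∧ 1 - Pf lamStar ≤ 1) ∧
      (∀ (x : EuclideanSpace ℝ (Fin d)) (Z : Ω → EuclideanSpace ℝ (Fin d)),
        MemLp Z 2 P →
        ‖(∫ a, Z a ∂P) - x‖ ≤ η * ‖x‖ →
        (∫ a, ‖Z a - ∫ a', Z a' ∂P‖ ^ 2 ∂P) ≤ w * ‖x‖ ^ 2 →
        (∫ a, ‖lamStar • Z a - x‖ ^ 2 ∂P) ≤ (1 - (1 - Pf lamStar)) * ‖x‖ ^ 2) := by

  intro Pf lamStar
  obtain ⟨⟨hls0, hls1⟩, hlt1, hopt⟩ := alg_part η w hη0 hη1 hw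
  have hlt1' : Pf lamStar < 1 := hlt1
  have hPfnn : 0 ≤ Pf lamStar := by
    show 0 ≤ (1 - lamStar + lamStar * η) ^ 2 + lamStar ^ 2 * w
    positivity
  refine ⟨⟨hls0, hls1⟩, hlt1', hopt, ⟨by linarith, by linarith⟩, ?_⟩
  intro x Z hZ hb hv
  have := key_bound P η w lamStar hls0 hls1 x Z hZ hb hv
  calc (∫ a, ‖lamStar • Z a - x‖ ^ 2 ∂P)
      ≤ ((1 - lamStar + lamStar * η) ^ 2 + lamStar ^ 2 * w) * ‖x‖ ^ 2 := this
    _ = (1 - (1 - Pf lamStar)) * ‖x‖ ^ 2 := by show _ = (1 - (1 - _)) * _; ring
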